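/- Let l > 1 and let c₀, k₀ : [0,∞) → ℝ be continuous and nonnegative functions such that the integral K := ∫₀^∞ k₀(t) exp[(l−1)∫₀^t c₀(s) ds] dt satisfies 0 < K < ∞. If w₀ > ((l−1)K)^{−1/(l−1)}, then there is no differentiable function w : [0,∞) → ℝ with w(0) = w₀ and w′(t) = c₀(t) w(t) + k₀(t) w(t)^l for all t ≥ 0. -/

import Mathlib

open MeasureTheory Set Filter

/-- If `l > 1`, `c₀, k₀` are continuous and nonnegative on `[0,∞)`,
`K := ∫₀^∞ k₀(t) exp[(l−1)∫₀^t c₀] dt` satisfies `0 < K < ∞`, and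
`w₀ > ((l−1)K)^{−1/(l−1)}`, then the Cauchy problem `w′ = c₀(t)w + k₀(t)w^l`,
`w(0) = w₀` has no global solution on `[0,∞)`. -/
theorem stmt_2 (l : ℝ) (hl : 1 < l) (c₀ k₀ : ℝ → ℝ)
    (hc_cont : ContinuousOn c₀ (Ici 0)) (hc_nonneg : ∀ t ≥ (0:ℝ), 0 ≤ c₀ t)
    (hk_cont : ContinuousOn k₀ (Ici 0)) (hk_nonneg : ∀ t ≥ (0:ℝ), 0 ≤ k₀ t)
    (hK_int : IntegrableOn
      (fun t => k₀ t * Real.exp ((l - 1) * ∫ s in (0:ℝ)..t, c₀ s)) (Ioi 0))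
    (hK_pos : 0 < ∫ t in Ioi (0:ℝ), k₀ t * Real.exp ((l - 1) * ∫ s in (0:ℝ)..t, c₀ s))
    (w₀ : ℝ)
    (hw₀ : w₀ > ((l - 1) *
      ∫ t in Ioi (0:ℝ), k₀ t * Real.exp ((l - 1) * ∫ s in (0:ℝ)..t, c₀ s))
        ^ (-(1 / (l - 1)) : ℝ)) :
    ¬ ∃ w : ℝ → ℝ, w 0 = w₀ ∧
      ∀ t ≥ (0:ℝ), HasDerivAt w (c₀ t * w t + k₀ t * w t ^ l) t := by
  rintro ⟨w, hw0, hw'⟩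
  set K : ℝ := ∫ t in Ioi (0:ℝ), k₀ t * Real.exp ((l - 1) * ∫ s in (0:ℝ)..t, c₀ s) with hK_def
  -- continuous extensions of c₀, k₀ to all of ℝ
  set c : ℝ → ℝ := fun t => c₀ (max t 0) with hc_def
  set k : ℝ → ℝ := fun t => k₀ (max t 0) with hk_def
  have hc : Continuous c :=
    hc_cont.comp_continuous (continuous_id.max continuous_const) (fun x => le_max_right x 0)
  have hk : Continuous k :=
    hk_cont.comp_continuous (continuous_id.max continuous_const) (fun x => le_max_right x 0)
  have hceq : ∀ t ≥ (0:ℝ), c t = c₀ t := fun t ht => by simp [hc_def, max_eq_left ht]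
  have hkeq : ∀ t ≥ (0:ℝ), k t = k₀ t := fun t ht => by simp [hk_def, max_eq_left ht]
  have hknn : ∀ t, 0 ≤ k t := fun t => hk_nonneg _ (le_max_right t 0)
  set C : ℝ → ℝ := fun t => ∫ s in (0:ℝ)..t, c s with hC_def
  have hC_deriv : ∀ t, HasDerivAt C (c t) t := fun t =>
    intervalIntegral.integral_hasDerivAt_right (hc.intervalIntegrable 0 t)
      (hc.stronglyMeasurableAtFilter _ _) hc.continuousAt
  have hC_cont : Continuous C := by
    rw [continuous_iff_continuousAt]; exact fun t => (hC_deriv t).continuousAt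
  have hC_eq : ∀ t ≥ (0:ℝ), C t = ∫ s in (0:ℝ)..t, c₀ s := by
    intro t ht
    refine intervalIntegral.integral_congr ?_
    intro s hs
    rw [uIcc_of_le ht] at hs
    exact hceq s hs.1
  have hC0 : C 0 = 0 := intervalIntegral.integral_same
  -- positivity of the RHS threshold and of w₀
  have hl1 : (0:ℝ) < l - 1 := by linarith
  have hw₀pos : 0 < w₀ :=
    lt_trans (Real.rpow_pos_of_pos (mul_pos hl1 hK_pos) _) hw₀
  have hw0pos : 0 < w 0 := by rw [hw0]; exact hw₀pos
  have hw_contAt : ∀ t ≥ (0:ℝ), ContinuousAt w t := fun t ht => (hw' t ht).continuousAt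
  have hw_cont : ContinuousOn w (Ici 0) := fun t ht => (hw_contAt t ht).continuousWithinAt
  -- Step A: w stays positive
  have hwpos : ∀ t ≥ (0:ℝ), 0 < w t := by
    by_contra h
    push_neg at h
    obtain ⟨t₀, ht₀, hwt₀⟩ := h
    set S : Set ℝ := {t | 0 ≤ t ∧ w t ≤ 0} with hS_def
    have hS_ne : S.Nonempty := ⟨t₀, ht₀, hwt₀⟩
    have hS_bdd : BddBelow S := ⟨0, fun x hx => hx.1⟩
    have hS_closed : IsClosed S := by
      have : S = Ici 0 ∩ w ⁻¹' (Iic 0) := by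
        ext x; simp [hS_def, mem_Ici, mem_Iic, and_comm]
      rw [this]
      exact hw_cont.preimage_isClosed_of_isClosed isClosed_Ici isClosed_Iic
    set T := sInf S with hT_def
    have hT_mem : T ∈ S := hS_closed.csInf_mem hS_ne hS_bdd
    have hT_nonneg : 0 ≤ T := hT_mem.1
    have hT_pos : 0 < T := by
      rcases hT_nonneg.lt_or_eq with h | h
      · exact h
      · exfalso; rw [← h] at hT_mem; exact absurd hT_mem.2 (not_le.mpr hw0pos)
    have hw_lt : ∀ t, 0 ≤ t → t < T → 0 < w t := by
      intro t ht htT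
      by_contra h
      push_neg at h
      exact absurd (csInf_le hS_bdd ⟨ht, h⟩) (not_le.mpr htT)
    -- v = w * exp(-C) is monotone on [0,T]
    set v : ℝ → ℝ := fun t => w t * Real.exp (-(C t)) with hv_def
    have hv_deriv : ∀ t ∈ Ioo (0:ℝ) T,
        HasDerivAt v (k₀ t * w t ^ l * Real.exp (-(C t))) t := by
      intro t ht
      have h1 := (hw' t ht.1.le).mul ((hC_deriv t).neg.exp)
      refine h1.congr_deriv (Eq.symm ?_)
      rw [hceq t ht.1.le, Pi.neg_apply]
      ring
    have hv_contOn : ContinuousOn v (Icc 0 T) := by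
      apply ContinuousOn.mul (hw_cont.mono Icc_subset_Ici_self)
      exact (hC_cont.neg.rexp).continuousOn
    have hv_mono : MonotoneOn v (Icc 0 T) := by
      apply monotoneOn_of_deriv_nonneg (convex_Icc 0 T) hv_contOn
      · intro x hx
        rw [interior_Icc] at hx
        exact ((hv_deriv x hx).differentiableAt).differentiableWithinAt
      · intro x hx
        rw [interior_Icc] at hx
        rw [(hv_deriv x hx).deriv]
        have hwx : 0 < w x := hw_lt x hx.1.le hx.2
        have := Real.rpow_pos_of_pos hwx l
        have := hk_nonneg x hx.1.le
        positivity
    have h0T : v 0 ≤ v T :=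
      hv_mono ⟨le_refl 0, hT_pos.le⟩ ⟨hT_pos.le, le_refl T⟩ hT_pos.le
    have hv0 : 0 < v 0 := by
      simp only [hv_def]
      positivity
    have hvT : v T ≤ 0 := by
      simp only [hv_def]
      exact mul_nonpos_of_nonpos_of_nonneg hT_mem.2 (Real.exp_nonneg _)
    linarith
  -- Step B: blow-up argument via g = w^(1-l) * exp((l-1)C)
  set f : ℝ → ℝ := fun t => k t * Real.exp ((l - 1) * C t) with hf_def
  have hf_cont : Continuous f := hk.mul ((continuous_const.mul hC_cont).rexp)
  have hf_eq : ∀ t ≥ (0:ℝ),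
      f t = k₀ t * Real.exp ((l - 1) * ∫ s in (0:ℝ)..t, c₀ s) := by
    intro t ht
    rw [hf_def]; simp only
    rw [hkeq t ht, hC_eq t ht]
  set g : ℝ → ℝ := fun t => w t ^ (1 - l) * Real.exp ((l - 1) * C t) with hg_def
  have hg_deriv : ∀ t ≥ (0:ℝ), HasDerivAt g ((1 - l) * f t) t := by
    intro t ht
    have hwt : 0 < w t := hwpos t ht
    have h1 : HasDerivAt (fun s => w s ^ (1 - l))
        ((c₀ t * w t + k₀ t * w t ^ l) * (1 - l) * w t ^ (1 - l - 1)) t :=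
      (hw' t ht).rpow_const (Or.inl hwt.ne')
    have h2 : HasDerivAt (fun s => Real.exp ((l - 1) * C s))
        (Real.exp ((l - 1) * C t) * ((l - 1) * c t)) t :=
      ((hC_deriv t).const_mul (l - 1)).exp
    have h3 := h1.mul h2
    refine h3.congr_deriv (Eq.symm ?_)
    simp only [hf_def]
    rw [hceq t ht, hkeq t ht]
    set u := w t
    set E := Real.exp ((l - 1) * C t)
    have e1 : u ^ l * u ^ (1 - l - 1) = 1 := by
      rw [← Real.rpow_add hwt, show l + (1 - l - 1) = 0 by ring, Real.rpow_zero]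
    have e2 : u * u ^ (1 - l - 1) = u ^ (1 - l) := by
      nth_rewrite 1 [← Real.rpow_one u]
      rw [← Real.rpow_add hwt, show (1:ℝ) + (1 - l - 1) = 1 - l by ring]
    linear_combination (c₀ t * (l - 1) * E) * e2 + (k₀ t * (l - 1) * E) * e1
  have hg_pos : ∀ t ≥ (0:ℝ), 0 < g t := by
    intro t ht
    have hwt : 0 < w t := hwpos t ht
    rw [hg_def]; simp only
    positivity
  -- FTC on [0, T] for any T ≥ 0
  have hFTC : ∀ T ≥ (0:ℝ), g T - g 0 = (1 - l) * ∫ t in (0:ℝ)..T, f t := by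
    intro T hT
    have := intervalIntegral.integral_eq_sub_of_hasDerivAt (f := g)
      (f' := fun t => (1 - l) * f t) (a := 0) (b := T) ?_ ?_
    · rw [← this, intervalIntegral.integral_const_mul]
    · intro x hx
      rw [uIcc_of_le hT] at hx
      exact hg_deriv x hx.1
    · exact (continuous_const.mul hf_cont).intervalIntegrable 0 T
  have hg0 : g 0 = w₀ ^ (1 - l) := by
    rw [hg_def]; simp only
    rw [hw0, hC0, mul_zero, Real.exp_zero, mul_one]
  -- hence for all T ≥ 0 : (l-1) * ∫₀^T f < w₀ ^ (1-l)
  have hbound : ∀ T ≥ (0:ℝ), (l - 1) * ∫ t in (0:ℝ)..T, f t < w₀ ^ (1 - l) := by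
    intro T hT
    have h1 := hFTC T hT
    have h2 := hg_pos T hT
    rw [hg0] at h1
    nlinarith
  -- K equals ∫ Ioi 0 f, and ∫₀^T f → K
  have hK_eq : K = ∫ t in Ioi (0:ℝ), f t := by
    rw [hK_def]
    apply setIntegral_congr_fun measurableSet_Ioi
    intro t ht
    exact (hf_eq t (le_of_lt ht)).symm
  have hfi : IntegrableOn f (Ioi 0) := by
    apply hK_int.congr_fun _ measurableSet_Ioi
    intro t ht
    exact (hf_eq t (le_of_lt ht)).symm
  have htend : Tendsto (fun T => ∫ t in (0:ℝ)..T, f t) atTop (nhds K) := by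
    rw [hK_eq]
    exact intervalIntegral_tendsto_integral_Ioi 0 hfi tendsto_id
  -- from hw₀ : w₀ ^ (1-l) < (l-1) * K
  have hlt : w₀ ^ (1 - l) < (l - 1) * K := by
    have hKl : 0 < (l - 1) * K := mul_pos hl1 hK_pos
    have hbase : (0:ℝ) ≤ ((l - 1) * K) ^ (-(1 / (l - 1)) : ℝ) :=
      (Real.rpow_pos_of_pos hKl _).le
    have h1 : (((l - 1) * K) ^ (-(1 / (l - 1)) : ℝ)) ^ (l - 1) < w₀ ^ (l - 1) :=
      Real.rpow_lt_rpow hbase hw₀ hl1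
    rw [← Real.rpow_mul hKl.le, show (-(1 / (l - 1)) * (l - 1)) = (-1 : ℝ) by
      field_simp, Real.rpow_neg_one] at h1
    have h2 : w₀ ^ (1 - l) = (w₀ ^ (l - 1)) ⁻¹ := by
      rw [show (1 - l : ℝ) = -(l - 1) by ring, Real.rpow_neg hw₀pos.le]
    have hb : 0 < w₀ ^ (l - 1) := Real.rpow_pos_of_pos hw₀pos _
    rw [h2]
    have hi1 : ((l - 1) * K)⁻¹ * ((l - 1) * K) = 1 := inv_mul_cancel₀ hKl.ne'
    have hi2 : (w₀ ^ (l - 1))⁻¹ * (w₀ ^ (l - 1)) = 1 := inv_mul_cancel₀ hb.ne'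
    nlinarith [mul_pos (inv_pos.mpr hb) hKl]
  -- obtain a large T contradicting hbound
  have hdiv : w₀ ^ (1 - l) / (l - 1) < K := by
    rw [div_lt_iff₀ hl1]; nlinarith
  obtain ⟨T, hFT, hT0⟩ :=
    ((htend.eventually (eventually_gt_nhds hdiv)).and (eventually_ge_atTop 0)).exists
  have := hbound T hT0
  rw [div_lt_iff₀ hl1] at hFT
  nlinarith
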